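/- Safety of the default fallback: in the Black-Box Simplex execution semantics with a correct decision module, if the stored sequence sᵢ at step i is permanently safe from xᵢ and the decision module rejects every proposed sequence from step i onward, then the system remains admissible at all future steps, with the commands applied being exactly the commands of sᵢ followed by infinite repetition of its last command. -/

import Mathlib

variable {X U W : Type*}

/-- Decision module step: output head of stored sequence; keep sequence if length 1, else drop head. -/
def dmStep [Inhabited U] (s : List U) : U × List U :=
  (s.headI, if s.length = 1 then s else s.tail)

/-- Infinite execution driven by the stored command sequence (dm_step semantics),
with disturbance sequence `w`. Returns (state, stored sequence) at each step. -/
def execW [Inhabited U] (f : X → U → W → X) (w : ℕ → W) (x : X) (s : List U) :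
    ℕ → X × List U
  | 0 => (x, s)
  | n + 1 =>
    let p := execW f w x s n
    (f p.1 (dmStep p.2).1 (w n), (dmStep p.2).2)

/-- `s` is a permanently safe command sequence from `x`: the dm_step-driven execution
is admissible at every step, for every choice of disturbances. -/
def PermSafe [Inhabited U] (Adm : X → Prop) (f : X → U → W → X) (x : X) (s : List U) : Prop :=
  s ≠ [] ∧ ∀ w : ℕ → W, ∀ n : ℕ, Adm (execW f w x s n).1

/-- System execution with decision-module update `dmu`, proposals `t`, disturbances `w`. -/
def sysExec [Inhabited U] (f : X → U → W → X) (dmu : X → List U → List U → List U)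
    (t : ℕ → List U) (w : ℕ → W) (x₀ : X) (s₀ : List U) : ℕ → X × List U
  | 0 => (x₀, s₀)
  | i + 1 =>
    let p := sysExec f dmu t w x₀ s₀ i
    let s' := dmu p.1 p.2 (t i)
    (f p.1 (dmStep s').1 (w i), (dmStep s').2)

lemma headI_eq_head' {α : Type*} [Inhabited α] (l : List α) (h : l ≠ []) :
    l.headI = l.head h := by
  cases l with
  | nil => exact absurd rfl h
  | cons a t => rfl

lemma execW_snd [Inhabited U] (f : X → U → W → X) (w : ℕ → W) (x : X) (s : List U)
    (hs : s ≠ []) (n : ℕ) :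
    (execW f w x s n).2 = s.drop (min n (s.length - 1)) := by
  have hlen : 1 ≤ s.length := List.length_pos_iff.mpr hs
  induction n with
  | zero => simp [execW]
  | succ n ih =>
    rw [execW]
    simp only [ih, dmStep]
    by_cases h : n < s.length - 1
    · have hmin : min n (s.length - 1) = n := by omega
      have hmin' : min (n+1) (s.length - 1) = n + 1 := by omega
      have hne : (s.drop n).length ≠ 1 := by
        rw [List.length_drop]; omega
      rw [hmin, hmin', if_neg hne, List.tail_drop]
    · have hmin : min n (s.length - 1) = s.length - 1 := by omega
      have hmin' : min (n+1) (s.length - 1) = s.length - 1 := by omega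
      have hone : (s.drop (s.length - 1)).length = 1 := by
        rw [List.length_drop]; omega
      rw [hmin, hmin', if_pos hone]

lemma sysExec_eq_execW [Inhabited U] (f : X → U → W → X)
    (dmu : X → List U → List U → List U) (t : ℕ → List U) (w : ℕ → W)
    (x₀ : X) (s₀ : List U)
    (hreject : ∀ j : ℕ, dmu (sysExec f dmu t w x₀ s₀ j).1 (sysExec f dmu t w x₀ s₀ j).2 (t j)
      = (sysExec f dmu t w x₀ s₀ j).2) (n : ℕ) :
    sysExec f dmu t w x₀ s₀ n = execW f w x₀ s₀ n := by
  induction n with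
  | zero => rfl
  | succ n ih =>
    have h := hreject n
    rw [sysExec, execW]
    rw [ih] at h
    simp only [ih, h]

theorem fallback_safety [Inhabited U] (Adm : X → Prop) (f : X → U → W → X)
    (dmu : X → List U → List U → List U) (t : ℕ → List U) (w : ℕ → W)
    (x₀ : X) (s₀ : List U)
    (hcorrect : ∀ x s tp, dmu x s tp = s ∨ PermSafe Adm f x (dmu x s tp))
    (hsafe : PermSafe Adm f x₀ s₀)
    (hreject : ∀ j : ℕ, dmu (sysExec f dmu t w x₀ s₀ j).1 (sysExec f dmu t w x₀ s₀ j).2 (t j)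
      = (sysExec f dmu t w x₀ s₀ j).2) :
    ∀ n : ℕ, Adm (sysExec f dmu t w x₀ s₀ n).1 ∧
      (dmStep (dmu (sysExec f dmu t w x₀ s₀ n).1 (sysExec f dmu t w x₀ s₀ n).2 (t n))).1
        = s₀.getD n s₀.getLast! := by
  obtain ⟨hne, hadm⟩ := hsafe
  intro n
  have heq := sysExec_eq_execW f dmu t w x₀ s₀ hreject n
  have hlen : 1 ≤ s₀.length := List.length_pos_iff.mpr hne
  constructor
  · rw [heq]; exact hadm w n
  · rw [hreject n, heq, execW_snd f w x₀ s₀ hne n]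
    have hk : min n (s₀.length - 1) < s₀.length := by omega
    have hdne : s₀.drop (min n (s₀.length - 1)) ≠ [] := by
      rw [← List.length_pos_iff, List.length_drop]; omega
    rw [dmStep]
    simp only [headI_eq_head' _ hdne, List.head_drop]
    by_cases h : n < s₀.length
    · have hm : min n (s₀.length - 1) = n := by omega
      simp only [hm]
      rw [List.getD_eq_getElem _ _ h]
    · have hm : min n (s₀.length - 1) = s₀.length - 1 := by omega
      have h1 : s₀.getD n s₀.getLast! = s₀.getLast! := by
        rw [List.getD_eq_default]; omega
      have h2 : s₀.getLast! = s₀.getLast hne :=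
        List.getLast!_of_getLast? (List.getLast?_eq_getLast hne)
      rw [h1, h2, List.getLast_eq_getElem]
      simp only [hm]
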